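/- Let l ≥ 1 be an integer and S₁, …, S_l pairwise disjoint finite sets with union S. Then the multivariate polynomial Q := 1 + (l−1)·∏_{s∈S}(1+X_s) − ∑_{m=1}^l ∏_{s∈S∖S_m}(1+X_s), in the variables (X_s)_{s∈S} over ℤ, satisfies Q(0) = 0 and all coefficients of Q are nonnegative. -/
import Mathlib


open MvPolynomial

open scoped Classical

lemma coeff_prod_one_add_X {S : Type*} [DecidableEq S] (F : Finset S) (d : S →₀ ℕ) :
    MvPolynomial.coeff d (∏ s ∈ F, (1 + MvPolynomial.X s : MvPolynomial S ℤ)) =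
      if ∀ s, d s ≤ (if s ∈ F then 1 else 0) then 1 else 0 := by
  induction F using Finset.induction_on generalizing d with
  | empty =>
      simp only [Finset.prod_empty, coeff_one, Finset.notMem_empty, if_false]
      congr 1
      simp [eq_comm (a := (0 : S →₀ ℕ)), Finsupp.ext_iff, Nat.le_zero, eq_iff_iff]
  | @insert a F ha ih =>
      rw [Finset.prod_insert ha, add_mul, one_mul, coeff_add, coeff_X_mul', ih, ih]
      by_cases hda : a ∈ d.support
      · rw [if_pos hda]
        have hd1 : ¬ ∀ s, d s ≤ (if s ∈ F then 1 else 0) := by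
          intro h
          have := h a
          rw [if_neg ha] at this
          exact (Finsupp.mem_support_iff.mp hda) (Nat.le_zero.mp this)
        rw [if_neg hd1, zero_add]
        congr 1
        rw [eq_iff_iff]
        constructor
        · intro h s
          have hs := h s
          by_cases hsa : s = a
          · subst hsa
            simp only [Finsupp.coe_tsub, Pi.sub_apply, Finsupp.single_eq_same, if_neg ha] at hs
            simp only [Finset.mem_insert, true_or, if_pos]
            omega
          · simp only [Finsupp.coe_tsub, Pi.sub_apply, Finsupp.single_eq_of_ne (Ne.symm hsa),
              Nat.sub_zero] at hs
            simpa [Finset.mem_insert, hsa] using hs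
        · intro h s
          have hs := h s
          by_cases hsa : s = a
          · subst hsa
            simp only [Finset.mem_insert, true_or, if_pos] at hs
            simp only [Finsupp.coe_tsub, Pi.sub_apply, Finsupp.single_eq_same, if_neg ha]
            omega
          · simp only [Finset.mem_insert, hsa, false_or] at hs
            simpa [Finsupp.single_eq_of_ne (Ne.symm hsa), hsa] using hs
      · rw [if_neg hda, add_zero]
        have hda0 : d a = 0 := by simpa [Finsupp.mem_support_iff] using hda
        congr 1
        rw [eq_iff_iff]
        constructor <;> intro h s <;> have hs := h s <;> by_cases hsa : s = a
        · subst hsa; simp [hda0]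
        · simpa [Finset.mem_insert, hsa] using hs
        · subst hsa; simp [hda0]
        · simpa [Finset.mem_insert, hsa] using hs

/-- with `S` partitioned into `l` blocks (the blocks being the fibers of
`blk : S → Fin l`), the polynomial
`Q = 1 + (l−1)·∏_{s∈S}(1+X_s) − ∑ₘ ∏_{s∉Sₘ}(1+X_s)` has zero constant coefficient and all of
its coefficients are nonnegative. -/
theorem growth_polynomial_nonneg_coeffs {S : Type*} [Fintype S] [DecidableEq S]
    (l : ℕ) (hl : 1 ≤ l) (blk : S → Fin l)
    (Q : MvPolynomial S ℤ)
    (hQ : Q = 1 + MvPolynomial.C ((l : ℤ) - 1) * ∏ s : S, (1 + MvPolynomial.X s)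
      - ∑ m : Fin l, ∏ s ∈ Finset.univ.filter (fun s => blk s ≠ m), (1 + MvPolynomial.X s)) :
    MvPolynomial.coeff 0 Q = 0 ∧ ∀ d : S →₀ ℕ, 0 ≤ MvPolynomial.coeff d Q := by
  have hc : ∀ d : S →₀ ℕ, MvPolynomial.coeff d Q =
      (if (0 : S →₀ ℕ) = d then 1 else 0)
        + ((l : ℤ) - 1) * (if ∀ s, d s ≤ 1 then 1 else 0)
        - ∑ m : Fin l, (if ∀ s, d s ≤ (if blk s ≠ m then 1 else 0) then (1:ℤ) else 0) := by
    intro d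
    rw [hQ, coeff_sub, coeff_add, coeff_one, coeff_C_mul, coeff_sum]
    simp only [coeff_prod_one_add_X, Finset.mem_univ, if_true, Finset.mem_filter, true_and]
  have hval : ∀ d : S →₀ ℕ, (∀ s, d s ≤ 1) → MvPolynomial.coeff d Q =
      (if (0 : S →₀ ℕ) = d then 1 else 0) + ((l : ℤ) - 1)
        - ((l : ℤ) - ((d.support.image blk).card : ℤ)) := by
    intro d h1
    rw [hc d, if_pos h1, mul_one]
    congr 1
    set T := d.support.image blk with hT
    have hsum : (∑ m : Fin l, (if ∀ s, d s ≤ (if blk s ≠ m then 1 else 0) then (1:ℤ) else 0))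
        = ∑ m : Fin l, (if m ∉ T then (1:ℤ) else 0) := by
      refine Finset.sum_congr rfl fun m _ => ?_
      congr 1
      rw [eq_iff_iff]
      constructor
      · intro h hm
        obtain ⟨s, hs, hbs⟩ := Finset.mem_image.mp hm
        have := h s
        rw [if_neg (by simp [hbs])] at this
        exact Finsupp.mem_support_iff.mp hs (Nat.le_zero.mp this)
      · intro h s
        by_cases hb : blk s = m
        · rw [if_neg (by simp [hb])]
          by_contra hds
          exact h (Finset.mem_image.mpr ⟨s, Finsupp.mem_support_iff.mpr (by omega), hb⟩)
        · rw [if_pos hb]; exact h1 s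
    rw [hsum]
    have hcard : T.card ≤ l := by
      calc T.card ≤ Fintype.card (Fin l) := Finset.card_le_univ T
        _ = l := Fintype.card_fin l
    rw [Finset.sum_boole]
    have : Finset.univ.filter (fun m => m ∉ T) = Tᶜ := by
      ext m; simp [Finset.mem_compl]
    rw [this, Finset.card_compl, Fintype.card_fin]
    push_cast [Nat.cast_sub hcard]
    ring
  constructor
  · rw [hval 0 (by simp)]
    simp
  · intro d
    by_cases h1 : ∀ s, d s ≤ 1
    · rw [hval d h1]
      by_cases hd0 : d = 0
      · subst hd0; simp
      · rw [if_neg (fun h => hd0 h.symm)]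
        have hne : (d.support.image blk).Nonempty := by
          apply Finset.Nonempty.image
          rw [Finset.nonempty_iff_ne_empty]
          simpa [Finsupp.support_eq_empty] using hd0
        have : 1 ≤ ((d.support.image blk).card : ℤ) := by
          exact_mod_cast Finset.card_pos.mpr hne
        linarith
    · rw [hc d]
      have hd0 : ¬ ((0 : S →₀ ℕ) = d) := by
        intro h; apply h1; intro s; rw [← h]; simp
      rw [if_neg hd0, if_neg h1, mul_zero]
      have : (∑ m : Fin l, (if ∀ s, d s ≤ (if blk s ≠ m then 1 else 0) then (1:ℤ) else 0)) = 0 := by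
        refine Finset.sum_eq_zero fun m _ => ?_
        rw [if_neg]
        intro h
        apply h1
        intro s
        have := h s
        split at this <;> omega
      rw [this]
      norm_num
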